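/- Let m > 0, 0 < r_ℓ < r_h, and R ∈ (r_ℓ/r_h, 1]. Define g(R) = m·(R - r_ℓ/r_h)/(1 - r_ℓ/r_h). For any x ∈ [0, m] and protection level p with g(R) ≤ p ≤ m, one has CP_u(p;(x,m)) ≥ R, where CP_u(p;(x,m)) = (max{p, m-x}·r_h + min{x, m-p}·r_ℓ)/(m·r_h). -/
import Mathlib


theorem stmt_11 (m rh rl R x p : ℝ) (hm : 0 < m) (hrl : 0 < rl) (hlh : rl < rh)
    (hR0 : rl / rh < R) (hR1 : R ≤ 1) (hx0 : 0 ≤ x) (hxm : x ≤ m)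
    (hpl : m * (R - rl / rh) / (1 - rl / rh) ≤ p) (hpm : p ≤ m) :
    (max p (m - x) * rh + min x (m - p) * rl) / (m * rh) ≥ R := by
  have hrh : 0 < rh := hrl.trans hlh
  have hd : 0 < 1 - rl / rh := by
    rw [sub_pos, div_lt_one hrh]; exact hlh
  rw [div_le_iff₀ hd] at hpl
  have hrl' : rl / rh * rh = rl := div_mul_cancel₀ _ hrh.ne'
  have hp : m * (R * rh - rl) ≤ p * (rh - rl) := by
    have := mul_le_mul_of_nonneg_right hpl hrh.le
    nlinarith [hrl']
  rw [ge_iff_le, le_div_iff₀ (by positivity)]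
  rcases le_total x (m - p) with h | h
  · rw [min_eq_left h, max_eq_right (by linarith)]
    nlinarith
  · rw [min_eq_right h]
    have := le_max_left p (m - x)
    nlinarith [mul_le_mul_of_nonneg_right this hrh.le]
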